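/- arXiv:1001.3800 — 13 statements merged into one kernel-verified Lean document; each statement's English description precedes it below -/
import Mathlib

section
/- If the almost contact structure on the Lie algebra 𝔤 is non-Abelian (i.e. [φx,φy] = −[x,y] for all x,y), then the cyclic sum of F vanishes, F(x,y,z) + F(y,z,x) + F(z,x,y) = 0 for all x,y,z ∈ 𝔤, and ξ is Killing, i.e. g(∇_xξ, y) + g(∇_yξ, x) = 0 for all x,y ∈ 𝔤 (so the induced left-invariant almost contact B-metric manifold belongs to the class F₃⊕F₇). -/
theorem statement_0
    {L : Type*} [LieRing L] [LieAlgebra ℝ L] [Module.Finite ℝ L]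
    (φ : L →ₗ[ℝ] L) (ξ : L) (η : L →ₗ[ℝ] ℝ) (g : LinearMap.BilinForm ℝ L)
    (hsym : ∀ x y : L, g x y = g y x)
    (hnd : ∀ x : L, (∀ y : L, g x y = 0) → x = 0)
    (hφξ : φ ξ = 0)
    (hφφ : ∀ x : L, φ (φ x) = -x + η x • ξ)
    (hηφ : ∀ x : L, η (φ x) = 0)
    (hηξ : η ξ = 1)
    (hgφ : ∀ x y : L, g (φ x) (φ y) = -(g x y) + η x * η y)
    (hηg : ∀ x : L, η x = g x ξ)
    (nabla : L →ₗ[ℝ] L →ₗ[ℝ] L)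
    (hkos : ∀ x y z : L, 2 * g (nabla x y) z = g ⁅x, y⁆ z + g ⁅z, x⁆ y + g ⁅z, y⁆ x)
    (F : L → L → L → ℝ)
    (hF : ∀ x y z : L, F x y z = g (nabla x (φ y) - φ (nabla x y)) z)
    (hna : ∀ x y : L, ⁅φ x, φ y⁆ = -⁅x, y⁆) :
    (∀ x y z : L, F x y z + F y z x + F z x y = 0) ∧
    (∀ x y : L, g (nabla x ξ) y + g (nabla y ξ) x = 0) := by
  -- ξ is central
  have hc : ∀ y : L, ⁅ξ, y⁆ = 0 := by
    intro y
    have h := hna ξ y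
    rw [hφξ, zero_lie] at h
    exact neg_eq_zero.mp h.symm
  have hc2 : ∀ y : L, ⁅y, ξ⁆ = 0 := by
    intro y
    rw [← lie_skew, hc, neg_zero]
  -- swap lemma: ⁅x, φ y⁆ = ⁅φ x, y⁆
  have hsw : ∀ x y : L, ⁅x, φ y⁆ = ⁅φ x, y⁆ := by
    intro x y
    have h := hna (φ x) y
    rw [hφφ, add_lie, neg_lie, smul_lie, hc, smul_zero, add_zero] at h
    exact neg_injective h
  -- g(φ x, y) = g(x, φ y)
  have hgs : ∀ x y : L, g (φ x) y = g x (φ y) := by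
    intro x y
    have h1 := hgφ x (φ y)
    rw [hφφ y, hηφ, mul_zero, add_zero] at h1
    have h2 : g (φ x) (-y + η y • ξ) = -(g (φ x) y) + η y * g (φ x) ξ := by
      simp [mul_comm]
    rw [h2] at h1
    have h3 : g (φ x) ξ = 0 := by rw [← hηg, hηφ]
    rw [h3, mul_zero, add_zero] at h1
    linarith
  -- formula for 2 F
  have hF2 : ∀ x y z : L, 2 * F x y z =
      g ⁅x, φ y⁆ z + g ⁅z, x⁆ (φ y) + g ⁅z, φ y⁆ x
      - (g ⁅x, y⁆ (φ z) + g ⁅φ z, x⁆ y + g ⁅φ z, y⁆ x) := by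
    intro x y z
    have h1 := hkos x (φ y) z
    have h2 := hkos x y (φ z)
    have h3 := hgs (nabla x y) z
    rw [hF]
    simp only [map_sub, LinearMap.sub_apply]
    linarith
  constructor
  · intro x y z
    have e1 := hF2 x y z
    have e2 := hF2 y z x
    have e3 := hF2 z x y
    simp only [hsw] at e1 e2 e3
    linarith
  · intro x y
    have h1 := hkos x ξ y
    have h2 := hkos y ξ x
    rw [hc2, hc2] at h1 h2
    simp only [map_zero, LinearMap.zero_apply] at h1 h2
    have h3 : g ⁅y, x⁆ ξ = - g ⁅x, y⁆ ξ := by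
      rw [← lie_skew y x]
      simp only [map_neg, LinearMap.neg_apply]
    linarith
end

section
/- If the almost contact structure on the Lie algebra 𝔤 is non-Abelian, then 2F(x,y,z) = g([x,φy] − φ[x,y], z) + g([x,φz] − φ[x,z], y) for all x,y,z ∈ 𝔤. -/
theorem statement_1
    {L : Type*} [LieRing L] [LieAlgebra ℝ L] [Module.Finite ℝ L]
    (φ : L →ₗ[ℝ] L) (ξ : L) (η : L →ₗ[ℝ] ℝ) (g : LinearMap.BilinForm ℝ L)
    (hsym : ∀ x y : L, g x y = g y x)
    (hnd : ∀ x : L, (∀ y : L, g x y = 0) → x = 0)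
    (hφξ : φ ξ = 0)
    (hφφ : ∀ x : L, φ (φ x) = -x + η x • ξ)
    (hηφ : ∀ x : L, η (φ x) = 0)
    (hηξ : η ξ = 1)
    (hgφ : ∀ x y : L, g (φ x) (φ y) = -(g x y) + η x * η y)
    (hηg : ∀ x : L, η x = g x ξ)
    (nabla : L →ₗ[ℝ] L →ₗ[ℝ] L)
    (hkos : ∀ x y z : L, 2 * g (nabla x y) z = g ⁅x, y⁆ z + g ⁅z, x⁆ y + g ⁅z, y⁆ x)
    (F : L → L → L → ℝ)
    (hF : ∀ x y z : L, F x y z = g (nabla x (φ y) - φ (nabla x y)) z)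
    (hna : ∀ x y : L, ⁅φ x, φ y⁆ = -⁅x, y⁆) :
    ∀ x y z : L, 2 * F x y z =
      g (⁅x, φ y⁆ - φ ⁅x, y⁆) z + g (⁅x, φ z⁆ - φ ⁅x, z⁆) y := by
  have hξ0 : ∀ w : L, ⁅w, ξ⁆ = (0 : L) := by
    intro w
    have h := hna w ξ
    rw [hφξ] at h
    simp at h
    rw [← lie_skew, ← h, neg_zero]
  have hswap : ∀ a b : L, g (φ a) b = g a (φ b) := by
    intro a b
    have hb : b = η b • ξ - φ (φ b) := by
      rw [hφφ]; abel
    calc g (φ a) b = g (φ a) (η b • ξ - φ (φ b)) := by rw [← hb]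
      _ = η b * g (φ a) ξ - g (φ a) (φ (φ b)) := by simp [smul_eq_mul]
      _ = η b * η (φ a) - (-(g a (φ b)) + η a * η (φ b)) := by
          rw [← hηg, hgφ]
      _ = g a (φ b) := by
          rw [hηφ, hηφ]
          ring
  have hcomm : ∀ a b : L, ⁅φ a, b⁆ = ⁅a, φ b⁆ := by
    intro a b
    have h := hna a (φ b)
    rw [hφφ b] at h
    simp [lie_add, lie_smul, hξ0 (φ a)] at h
    rw [← lie_skew, ← lie_skew a (φ b), h]
  intro x y z
  have e1 := hkos x (φ y) z
  have e2 := hkos x y (φ z)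
  rw [hF]
  have c1 : g (nabla x (φ y) - φ (nabla x y)) z
      = g (nabla x (φ y)) z - g (nabla x y) (φ z) := by
    rw [map_sub, LinearMap.sub_apply, hswap]
  have c2 : g (⁅x, φ y⁆ - φ ⁅x, y⁆) z = g ⁅x, φ y⁆ z - g ⁅x, y⁆ (φ z) := by
    rw [map_sub, LinearMap.sub_apply, hswap]
  have c3 : g (⁅x, φ z⁆ - φ ⁅x, z⁆) y = g ⁅x, φ z⁆ y - g ⁅x, z⁆ (φ y) := by
    rw [map_sub, LinearMap.sub_apply, hswap]
  rw [c1, c2, c3]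
  have c4 : g ⁅φ z, y⁆ x = g ⁅z, φ y⁆ x := by rw [hcomm]
  have c5 : g ⁅z, x⁆ (φ y) = -g ⁅x, z⁆ (φ y) := by
    rw [← lie_skew x z, map_neg, LinearMap.neg_apply, neg_neg]
  have c6 : g ⁅φ z, x⁆ y = -g ⁅x, φ z⁆ y := by
    rw [← lie_skew x (φ z), map_neg, LinearMap.neg_apply, neg_neg]
  linarith [e1, e2, c4, c5, c6]
end

section
/- Suppose the almost contact structure on the Lie algebra 𝔤 is non-Abelian. Then F(x,y,ξ) = 0 and F(ξ,y,z) = 0 for all x,y,z ∈ 𝔤 (the F₃-condition) if and only if η([x,y]) = 0 for all x,y ∈ 𝔤. -/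
theorem statement_2
    {L : Type*} [LieRing L] [LieAlgebra ℝ L] [Module.Finite ℝ L]
    (φ : L →ₗ[ℝ] L) (ξ : L) (η : L →ₗ[ℝ] ℝ) (g : LinearMap.BilinForm ℝ L)
    (hsym : ∀ x y : L, g x y = g y x)
    (hnd : ∀ x : L, (∀ y : L, g x y = 0) → x = 0)
    (hφξ : φ ξ = 0)
    (hφφ : ∀ x : L, φ (φ x) = -x + η x • ξ)
    (hηφ : ∀ x : L, η (φ x) = 0)
    (hηξ : η ξ = 1)
    (hgφ : ∀ x y : L, g (φ x) (φ y) = -(g x y) + η x * η y)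
    (hηg : ∀ x : L, η x = g x ξ)
    (nabla : L →ₗ[ℝ] L →ₗ[ℝ] L)
    (hkos : ∀ x y z : L, 2 * g (nabla x y) z = g ⁅x, y⁆ z + g ⁅z, x⁆ y + g ⁅z, y⁆ x)
    (F : L → L → L → ℝ)
    (hF : ∀ x y z : L, F x y z = g (nabla x (φ y) - φ (nabla x y)) z)
    (hna : ∀ x y : L, ⁅φ x, φ y⁆ = -⁅x, y⁆) :
    ((∀ x y : L, F x y ξ = 0) ∧ (∀ y z : L, F ξ y z = 0)) ↔
      (∀ x y : L, η ⁅x, y⁆ = 0) := by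
  -- ξ is central
  have hξc : ∀ y : L, ⁅ξ, y⁆ = 0 := by
    intro y
    have h := hna ξ y
    rw [hφξ, zero_lie] at h
    exact neg_eq_zero.mp h.symm
  have hcξ : ∀ y : L, ⁅y, ξ⁆ = 0 := by
    intro y
    rw [← neg_eq_zero, lie_skew, hξc]
  -- φ is g-symmetric
  have hφsym : ∀ a z : L, g (φ a) z = g a (φ z) := by
    intro a z
    have h1 := hgφ a (φ z)
    rw [hφφ z, hηφ z, mul_zero, map_add, map_neg, map_smul] at h1
    have h2 : g (φ a) ξ = 0 := by rw [← hηg, hηφ]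
    rw [h2] at h1
    simp only [smul_eq_mul, mul_zero, add_zero] at h1
    linarith
  -- 2 g(∇_x u, ξ) = η ⁅x, u⁆
  have hnab : ∀ x u : L, 2 * g (nabla x u) ξ = η ⁅x, u⁆ := by
    intro x u
    have h := hkos x u ξ
    rw [hξc x, hξc u] at h
    simp only [LinearMap.map_zero, LinearMap.zero_apply] at h
    rw [h, ← hηg]; ring
  -- F x y ξ = η ⁅x, φ y⁆ / 2
  have hFformula : ∀ x y : L, 2 * F x y ξ = η ⁅x, φ y⁆ := by
    intro x y
    rw [hF]
    have h2 : g (φ (nabla x y)) ξ = 0 := by rw [← hηg, hηφ]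
    rw [map_sub, LinearMap.sub_apply, h2, sub_zero]
    exact hnab x (φ y)
  -- [φ x, y] = [x, φ y]
  have hswap : ∀ x y : L, ⁅φ x, y⁆ = ⁅x, φ y⁆ := by
    intro x y
    have h := hna x (φ y)
    rw [hφφ y, lie_add, lie_neg, lie_smul, hcξ (φ x), smul_zero, add_zero] at h
    exact neg_injective h
  -- F ξ y z = 0 always
  have hFξ : ∀ y z : L, F ξ y z = 0 := by
    intro y z
    have hnabξ : ∀ u v : L, 2 * g (nabla ξ u) v = η ⁅v, u⁆ := by
      intro u v
      have h := hkos ξ u v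
      rw [hξc u, hcξ v] at h
      simp only [LinearMap.map_zero, LinearMap.zero_apply] at h
      rw [h, ← hηg]; ring
    have h1 := hnabξ (φ y) z
    have h2 := hnabξ y (φ z)
    have h3 : g (φ (nabla ξ y)) z = g (nabla ξ y) (φ z) := hφsym _ _
    have h4 : η ⁅z, φ y⁆ = η ⁅φ z, y⁆ := by rw [hswap]
    rw [hF]
    rw [map_sub, LinearMap.sub_apply, h3]
    linarith
  constructor
  · rintro ⟨h1, _⟩ x y
    have hy : η ⁅x, φ (φ y)⁆ = 0 := by
      have := hFformula x (φ y)
      rw [h1 x (φ y), mul_zero] at this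
      exact this.symm
    rw [hφφ y, lie_add, lie_neg, lie_smul, hcξ x, smul_zero, add_zero, map_neg,
      neg_eq_zero] at hy
    exact hy
  · intro h
    refine ⟨fun x y => ?_, hFξ⟩
    have := hFformula x y
    rw [h x (φ y)] at this
    linarith
end

section
/- Suppose the almost contact structure on the Lie algebra 𝔤 is non-Abelian. Then F(x,y,z) = −F(φx, φy, z) − F(φx, y, φz) for all x,y,z ∈ 𝔤 (the F₇-condition) if and only if φ[φx, y] = φ(φ[x,y]) for all x,y ∈ 𝔤. -/
theorem statement_3
    {L : Type*} [LieRing L] [LieAlgebra ℝ L] [Module.Finite ℝ L]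
    (φ : L →ₗ[ℝ] L) (ξ : L) (η : L →ₗ[ℝ] ℝ) (g : LinearMap.BilinForm ℝ L)
    (hsym : ∀ x y : L, g x y = g y x)
    (hnd : ∀ x : L, (∀ y : L, g x y = 0) → x = 0)
    (hφξ : φ ξ = 0)
    (hφφ : ∀ x : L, φ (φ x) = -x + η x • ξ)
    (hηφ : ∀ x : L, η (φ x) = 0)
    (hηξ : η ξ = 1)
    (hgφ : ∀ x y : L, g (φ x) (φ y) = -(g x y) + η x * η y)
    (hηg : ∀ x : L, η x = g x ξ)
    (nabla : L →ₗ[ℝ] L →ₗ[ℝ] L)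
    (hkos : ∀ x y z : L, 2 * g (nabla x y) z = g ⁅x, y⁆ z + g ⁅z, x⁆ y + g ⁅z, y⁆ x)
    (F : L → L → L → ℝ)
    (hF : ∀ x y z : L, F x y z = g (nabla x (φ y) - φ (nabla x y)) z)
    (hna : ∀ x y : L, ⁅φ x, φ y⁆ = -⁅x, y⁆) :
    (∀ x y z : L, F x y z = -F (φ x) (φ y) z - F (φ x) y (φ z)) ↔
      (∀ x y : L, φ ⁅φ x, y⁆ = φ (φ ⁅x, y⁆)) := by
  have hgξ : ∀ w : L, g w ξ = η w := fun w => (hηg w).symm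
  have hgξ' : ∀ w : L, g ξ w = η w := fun w => by rw [hsym, hgξ]
  -- φ is g-selfadjoint
  have hsa : ∀ u v : L, g (φ u) v = g u (φ v) := by
    intro u v
    have h1 := hgφ u (φ v)
    rw [hφφ v, hηφ v, mul_zero] at h1
    simp only [map_add, map_neg, map_smul, smul_eq_mul, hgξ, hηφ, mul_zero, add_zero] at h1
    linarith
  -- ξ is central
  have hcent : ∀ u : L, ⁅u, ξ⁆ = 0 := by
    intro u
    have h := hna u ξ
    rw [hφξ, lie_zero] at h
    have := h.symm
    rwa [neg_eq_zero] at this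
  have hcent' : ∀ u : L, ⁅ξ, u⁆ = 0 := fun u => by
    rw [← lie_skew, hcent, neg_zero]
  -- star identity
  have hstar : ∀ u v : L, ⁅u, φ v⁆ = ⁅φ u, v⁆ := by
    intro u v
    have h := hna u (φ v)
    rw [hφφ v] at h
    rw [lie_add, lie_smul, hcent, smul_zero, add_zero, lie_neg] at h
    exact (neg_inj.mp h).symm
  -- Koszul formula for 2F
  have h2F : ∀ a b c : L, 2 * F a b c =
      (g ⁅a, φ b⁆ c + g ⁅c, a⁆ (φ b) + g ⁅c, φ b⁆ a)
      - (g ⁅a, b⁆ (φ c) + g ⁅φ c, a⁆ b + g ⁅φ c, b⁆ a) := by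
    intro a b c
    have e0 : F a b c = g (nabla a (φ b)) c - g (nabla a b) (φ c) := by
      rw [hF, map_sub, LinearMap.sub_apply, hsa]
    linear_combination 2 * e0 + hkos a (φ b) c - hkos a b (φ c)
  -- the main identity
  have hMAIN : ∀ x y z : L, 2 * (F x y z + F (φ x) (φ y) z + F (φ x) y (φ z)) =
      (g ⁅φ x, y⁆ z - g ⁅x, y⁆ (φ z) - η ⁅φ x, y⁆ * η z)
      - (g ⁅φ z, x⁆ y - g ⁅z, x⁆ (φ y) - η ⁅φ z, x⁆ * η y) := by
    intro x y z
    have e1 := h2F x y z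
    have e2 := h2F (φ x) (φ y) z
    have e3 := h2F (φ x) y (φ z)
    simp only [hstar, hφφ, hφξ, lie_add, add_lie, lie_neg, neg_lie, lie_smul, smul_lie,
      hcent, hcent', smul_zero, lie_zero, zero_lie, add_zero, zero_add, neg_zero,
      map_add, map_neg, map_smul, map_zero, LinearMap.add_apply, LinearMap.neg_apply,
      LinearMap.smul_apply, LinearMap.zero_apply, smul_eq_mul, hgξ, hηφ, neg_neg,
      mul_zero, zero_mul] at e1 e2 e3
    linear_combination e1 + e2 + e3
  constructor
  · -- F7 implies the bracket condition
    intro h7 x y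
    set d : L → L → L := fun a b => ⁅φ a, b⁆ - φ ⁅a, b⁆ - η ⁅φ a, b⁆ • ξ with hd
    have hdη : ∀ a b : L, η (d a b) = 0 := by
      intro a b
      simp only [hd, map_sub, map_smul, hηφ, hηξ, smul_eq_mul, mul_one, sub_zero, sub_self]
    have hdξg : ∀ a b : L, g (d a b) ξ = 0 := fun a b => by rw [hgξ]; exact hdη a b
    have hTD : ∀ a b c : L, g (d a b) c
        = g ⁅φ a, b⁆ c - g ⁅a, b⁆ (φ c) - η ⁅φ a, b⁆ * η c := by
      intro a b c
      simp only [hd, map_sub, map_smul, LinearMap.sub_apply, LinearMap.smul_apply,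
        smul_eq_mul, hgξ']
      rw [hsa]
    have hcyc : ∀ a b c : L, g (d a b) c = g (d c a) b := by
      intro a b c
      have h := hMAIN a b c
      have h0 : F a b c + F (φ a) (φ b) c + F (φ a) b (φ c) = 0 := by
        have := h7 a b c; linarith
      rw [hTD a b c, hTD c a b]
      rw [h0, mul_zero] at h
      linarith
    have hdφ1 : ∀ a b : L, d (φ a) b = - φ (d a b) := by
      intro a b
      simp only [hd]
      rw [hφφ a]
      simp only [add_lie, neg_lie, smul_lie, hcent', smul_zero, add_zero,
        map_sub, map_smul, map_neg, map_add, hφφ, hηφ, hφξ, hηξ, smul_zero,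
        zero_smul, sub_zero, mul_one, smul_eq_mul]
      module
    have hdφ2 : ∀ a b : L, d a (φ b) = - φ (d a b) := by
      intro a b
      simp only [hd]
      rw [hna, hstar]
      simp only [map_neg, map_sub, map_smul, hφξ, smul_zero, sub_zero, hφφ,
        neg_smul, neg_neg]
      module
    have key : ∀ c : L, g (d x y) c = 0 := by
      intro z
      have s1 : g (d (φ x) y) (φ z) = g (d x y) z := by
        rw [hdφ1, map_neg, LinearMap.neg_apply, hsa, hφφ]
        simp only [map_add, map_neg, map_smul, smul_eq_mul, hdξg, mul_zero,
          add_zero, neg_neg]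
      have s3 : g (d (φ z) (φ x)) y = - g (d z x) y := by
        have hv : d (φ z) (φ x) = - d z x := by
          rw [hdφ2, hdφ1, map_neg, neg_neg, hφφ, hdη, zero_smul, add_zero]
        rw [hv, map_neg, LinearMap.neg_apply]
      have chain : g (d x y) z = - g (d x y) z := by
        calc g (d x y) z = g (d (φ x) y) (φ z) := s1.symm
          _ = g (d (φ z) (φ x)) y := hcyc (φ x) y (φ z)
          _ = - g (d z x) y := s3
          _ = - g (d x y) z := by rw [← hcyc x y z]
      linarith
    have hdxy : d x y = 0 := hnd _ key
    have hv : ⁅φ x, y⁆ - φ ⁅x, y⁆ - η ⁅φ x, y⁆ • ξ = 0 := by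
      simpa [hd] using hdxy
    have := congrArg φ hv
    rw [map_sub, map_sub, map_smul, hφξ, smul_zero, sub_zero, map_zero,
      sub_eq_zero] at this
    exact this
  · -- bracket condition implies F7
    intro hc x y z
    have hD0 : ∀ a b : L, ⁅φ a, b⁆ = φ ⁅a, b⁆ + η ⁅φ a, b⁆ • ξ := by
      intro a b
      have h := congrArg φ (hc a b)
      rw [hφφ, hφφ, hηφ, zero_smul, add_zero] at h
      linear_combination (norm := module) -h
    have hT0 : (g ⁅φ x, y⁆ z - g ⁅x, y⁆ (φ z) - η ⁅φ x, y⁆ * η z)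
        - (g ⁅φ z, x⁆ y - g ⁅z, x⁆ (φ y) - η ⁅φ z, x⁆ * η y) = 0 := by
      rw [hD0 x y, hD0 z x]
      simp only [map_add, map_smul, LinearMap.add_apply, LinearMap.smul_apply,
        smul_eq_mul, hgξ', hgξ, hηφ, hηξ, mul_one]
      rw [hsa, hsa]
      ring
    have h := hMAIN x y z
    rw [hT0] at h
    linarith
end

section
/- Suppose the almost contact structure on the Lie algebra 𝔤 is non-Abelian. Then F(x,y,z) = 0 for all x,y,z ∈ 𝔤 (the F₀-condition) if and only if [x,y] = −φ[φx, y] for all x,y ∈ 𝔤. -/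
theorem statement_4
    {L : Type*} [LieRing L] [LieAlgebra ℝ L] [Module.Finite ℝ L]
    (φ : L →ₗ[ℝ] L) (ξ : L) (η : L →ₗ[ℝ] ℝ) (g : LinearMap.BilinForm ℝ L)
    (hsym : ∀ x y : L, g x y = g y x)
    (hnd : ∀ x : L, (∀ y : L, g x y = 0) → x = 0)
    (hφξ : φ ξ = 0)
    (hφφ : ∀ x : L, φ (φ x) = -x + η x • ξ)
    (hηφ : ∀ x : L, η (φ x) = 0)
    (hηξ : η ξ = 1)
    (hgφ : ∀ x y : L, g (φ x) (φ y) = -(g x y) + η x * η y)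
    (hηg : ∀ x : L, η x = g x ξ)
    (nabla : L →ₗ[ℝ] L →ₗ[ℝ] L)
    (hkos : ∀ x y z : L, 2 * g (nabla x y) z = g ⁅x, y⁆ z + g ⁅z, x⁆ y + g ⁅z, y⁆ x)
    (F : L → L → L → ℝ)
    (hF : ∀ x y z : L, F x y z = g (nabla x (φ y) - φ (nabla x y)) z)
    (hna : ∀ x y : L, ⁅φ x, φ y⁆ = -⁅x, y⁆) :
    (∀ x y z : L, F x y z = 0) ↔ (∀ x y : L, ⁅x, y⁆ = -φ ⁅φ x, y⁆) := by
  -- ξ is central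
  have hξc : ∀ y : L, ⁅ξ, y⁆ = 0 := by
    intro y
    have h := hna ξ y
    rw [hφξ, zero_lie] at h
    exact neg_eq_zero.mp h.symm
  -- swap lemma
  have hswap : ∀ x y : L, ⁅x, φ y⁆ = ⁅φ x, y⁆ := by
    intro x y
    have h := hna (φ x) y
    rw [hφφ x, add_lie, neg_lie, smul_lie, hξc, smul_zero, add_zero] at h
    exact neg_injective h
  -- φ is g-symmetric
  have hφg : ∀ x z : L, g (φ x) z = g x (φ z) := by
    intro x z
    have h := hgφ x (φ z)
    rw [hφφ z, hηφ z, mul_zero, map_add, map_neg, map_smul] at h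
    have h2 : g (φ x) ξ = 0 := by rw [← hηg, hηφ]
    rw [h2, smul_zero, add_zero] at h
    linarith
  -- B-operator
  set B : L → L → L := fun u v => ⁅φ u, v⁆ - φ ⁅u, v⁆ with hBdef
  -- key formula for 2F
  have hFeq : ∀ x y z : L, 2 * F x y z = g (B x y) z - g (B z x) y := by
    intro x y z
    have k1 := hkos x (φ y) z
    have k2 := hkos x y (φ z)
    rw [hswap x y, ← hφg ⁅z, x⁆ y, hswap z y] at k1
    rw [← hφg ⁅x, y⁆ z] at k2
    rw [hF]
    simp only [hBdef, map_sub, LinearMap.sub_apply, hφg (nabla x y) z]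
    linarith
  constructor
  · -- F ≡ 0 → condition
    intro hF0
    -- cyclic symmetry of S
    have hS : ∀ x y z : L, g (B x y) z = g (B z x) y := by
      intro x y z
      have h := hFeq x y z
      rw [hF0] at h
      linarith
    -- moving φ between first two slots
    have hB12 : ∀ x y : L, B (φ x) y = B x (φ y) := by
      intro x y
      simp only [hBdef]
      rw [hφφ x, add_lie, smul_lie, hξc, smul_zero, add_zero, neg_lie,
        hna x y, hswap x y]
    -- moving φ from slot 3 to slot 1
    have hm31 : ∀ x y z : L, g (B x y) (φ z) = g (B (φ x) y) z := by
      intro x y z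
      rw [hS x y (φ z), hB12 z x, ← hS]
    -- key relation
    have hkey : ∀ x y : L, B x (φ y) = -φ (B x y) - η ⁅x, y⁆ • ξ := by
      intro x y
      simp only [hBdef]
      rw [hna x y, hswap x y, map_sub, hφφ ⁅x, y⁆]
      abel
    -- η vanishes on brackets, and S x y (φ z) = 0
    have h2S : ∀ x y z : L, 2 * g (B x y) (φ z) = -(η ⁅x, y⁆ * η z) := by
      intro x y z
      have h1 : g (B x (φ y)) z = -(g (B x y) (φ z)) - η ⁅x, y⁆ * η z := by
        rw [hkey x y, map_sub, LinearMap.sub_apply, map_neg, LinearMap.neg_apply,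
          map_smul, LinearMap.smul_apply, hφg, smul_eq_mul, hsym ξ z, ← hηg]
      have h2 : g (B x (φ y)) z = g (B x y) (φ z) := by
        rw [← hB12, ← hm31]
      linarith
    have hηlie : ∀ x y : L, η ⁅x, y⁆ = 0 := by
      intro x y
      have h := h2S x y ξ
      rw [hφξ, map_zero, hηξ, mul_one] at h
      linarith
    have hSφ : ∀ x y z : L, g (B x y) (φ z) = 0 := by
      intro x y z
      have h := h2S x y z
      rw [hηlie, zero_mul, neg_zero] at h
      linarith
    have hSξ : ∀ x y : L, g (B x y) ξ = 0 := by
      intro x y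
      rw [hS x y ξ]
      simp only [hBdef]
      simp [hφξ, hξc]
    have hB0 : ∀ x y : L, B x y = 0 := by
      intro x y
      apply hnd
      intro w
      have hw : w = η w • ξ - φ (φ w) := by
        rw [hφφ w]; abel
      rw [hw, map_sub, map_smul, hSφ, hSξ, smul_zero, sub_zero]
    -- conclude
    intro x y
    have hb := hB0 x y
    simp only [hBdef, sub_eq_zero] at hb
    rw [hb, hφφ ⁅x, y⁆, hηlie, zero_smul, add_zero, neg_neg]
  · -- condition → F ≡ 0
    intro hC x y z
    have hB0 : ∀ u v : L, B u v = 0 := by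
      intro u v
      have h := hC (φ u) v
      rw [hφφ u, add_lie, smul_lie, hξc, smul_zero, add_zero, neg_lie,
        map_neg, neg_neg] at h
      simp only [hBdef, h, sub_self]
    have h := hFeq x y z
    simp only [hB0, map_zero, LinearMap.zero_apply, sub_zero] at h
    linarith
end

section
/- The structure (φ, ξ, η, g, [·,·]) on V = ℝ⁵ satisfies [φx, φy] = −[x,y] (the non-Abelian condition) and φ[φx, y] = φ(φ[x,y]) (the F₇-condition) for all x,y ∈ V; hence the induced left-invariant almost contact B-metric manifold belongs to the class F₇. Moreover, the F₀-condition [x,y] = −φ[φx,y] holds for all x,y ∈ V if and only if μ₁ = μ₂ = 0 (equivalently, the manifold is an F₀-manifold if and only if μ₁² + μ₂² = 0). -/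
noncomputable section

/-- The underlying 5-dimensional real vector space. -/
abbrev V : Type := Fin 5 → ℝ

/-- The basis `E₁,…,E₅` (0-indexed: `E 0 = E₁`, …, `E 4 = E₅`). -/
def E (i : Fin 5) : V := Pi.single i 1

/-- `ξ = E₅`. -/
def xiV : V := E 4

/-- The almost contact endomorphism `φ`. -/
def phiV (x : V) : V := ![-x 2, -x 3, x 0, x 1, 0]

/-- The contact form `η`. -/
def etaF (x : V) : ℝ := x 4

/-- The B-metric `g`. -/
def gB (x y : V) : ℝ := x 0 * y 0 + x 1 * y 1 - x 2 * y 2 - x 3 * y 3 + x 4 * y 4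

/-- The signs `εᵢ = g(Eᵢ,Eᵢ)`. -/
def eps : Fin 5 → ℝ := ![1, 1, -1, -1, 1]

/-- The Lie bracket: the unique skew-symmetric bilinear bracket whose only nonzero
basis brackets are `[E₁,E₂] = -[E₃,E₄] = -λ₁E₁ - λ₂E₂ + λ₃E₃ + λ₄E₄ + 2μ₁E₅` and
`[E₁,E₄] = -[E₂,E₃] = -λ₃E₁ - λ₄E₂ - λ₁E₃ - λ₂E₄ + 2μ₂E₅`. -/
def brkt (l1 l2 l3 l4 m1 m2 : ℝ) (x y : V) : V :=
  (x 0 * y 1 - x 1 * y 0 - x 2 * y 3 + x 3 * y 2) •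
    (![-l1, -l2, l3, l4, 2 * m1] : V) +
  (x 0 * y 3 - x 3 * y 0 - x 1 * y 2 + x 2 * y 1) •
    (![-l3, -l4, -l1, -l2, 2 * m2] : V)

/-- The torsion `T(x,y) = 2(η(x)∇_yξ − η(y)∇_xξ + g(∇_xξ,y)ξ)`. -/
def Tors (nabla : V → V → V) (x y : V) : V :=
  (2 : ℝ) • (etaF x • nabla y xiV - etaF y • nabla x xiV + gB (nabla x xiV) y • xiV)

/-- The φKT-connection `D_x y = ∇_x y + (1/2)T(x,y)`. -/
def Dconn (nabla : V → V → V) (x y : V) : V :=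
  nabla x y + (1 / 2 : ℝ) • Tors nabla x y

/-- Curvature of a connection: `∇_x∇_y z − ∇_y∇_x z − ∇_{[x,y]}z`. -/
def curv (br conn : V → V → V) (x y z : V) : V :=
  conn x (conn y z) - conn y (conn x z) - conn (br x y) z

/-- Curvature (0,4)-tensor. -/
def curv4 (br conn : V → V → V) (x y z w : V) : ℝ := gB (curv br conn x y z) w

/-- Ricci tensor. -/
def ricci (br conn : V → V → V) (y z : V) : ℝ :=
  ∑ i : Fin 5, eps i * curv4 br conn (E i) y z (E i)

/-- Scalar curvature. -/
def scal (br conn : V → V → V) : ℝ :=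
  ∑ i : Fin 5, ∑ j : Fin 5, eps i * eps j * curv4 br conn (E i) (E j) (E j) (E i)

/-- `(∇_xφ)y = ∇_x(φy) − φ(∇_x y)`. -/
def nphi (nabla : V → V → V) (x y : V) : V := nabla x (phiV y) - phiV (nabla x y)

/-- The square norm `‖∇φ‖²`. -/
def sqnormNphi (nabla : V → V → V) : ℝ :=
  ∑ i : Fin 5, ∑ k : Fin 5,
    eps i * eps k * gB (nphi nabla (E i) (E k)) (nphi nabla (E i) (E k))

theorem statement_9 (l1 l2 l3 l4 m1 m2 : ℝ) :
    (∀ x y : V, brkt l1 l2 l3 l4 m1 m2 (phiV x) (phiV y) = -brkt l1 l2 l3 l4 m1 m2 x y) ∧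
    (∀ x y : V, phiV (brkt l1 l2 l3 l4 m1 m2 (phiV x) y) =
      phiV (phiV (brkt l1 l2 l3 l4 m1 m2 x y))) ∧
    ((∀ x y : V, brkt l1 l2 l3 l4 m1 m2 x y = -phiV (brkt l1 l2 l3 l4 m1 m2 (phiV x) y)) ↔
      (m1 = 0 ∧ m2 = 0)) := by
  refine ⟨?_, ?_, ?_, ?_⟩
  · intro x y
    funext i
    fin_cases i <;>
      simp [brkt, phiV, Pi.add_apply, Pi.smul_apply, smul_eq_mul] <;> ring
  · intro x y
    funext i
    fin_cases i <;>
      simp [brkt, phiV, Pi.add_apply, Pi.smul_apply, smul_eq_mul] <;> ring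
  · intro h
    constructor
    · have := congrFun (h (E 0) (E 1)) 4
      simp [brkt, phiV, E, Pi.single_apply, Pi.add_apply, Pi.smul_apply, smul_eq_mul] at this
      linarith
    · have := congrFun (h (E 0) (E 3)) 4
      simp [brkt, phiV, E, Pi.single_apply, Pi.add_apply, Pi.smul_apply, smul_eq_mul] at this
      linarith
  · rintro ⟨rfl, rfl⟩ x y
    funext i
    fin_cases i <;>
      simp [brkt, phiV, Pi.add_apply, Pi.smul_apply, smul_eq_mul] <;> ring
end
end

section
/- The connection D parallelizes its own torsion: T(x,y) = −T(y,x), T(x,y) = D_x y − D_y x − [x,y], and D_x(T(y,z)) − T(D_x y, z) − T(y, D_x z) = 0 for all x,y,z ∈ V (i.e. the φKT-connection D on this F₇-manifold has D-parallel torsion T). -/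
set_option maxHeartbeats 2000000
noncomputable section

def NN (l1 l2 l3 l4 m1 m2 : ℝ) (x y : V) : V :=
  ![-l1*x 0*y 1 + l1*x 2*y 3 - l2*x 1*y 1 + l2*x 3*y 3 - l3*x 0*y 3 - l3*x 2*y 1 - l4*x 1*y 3 - l4*x 3*y 1 + m1*x 1*y 4 + m1*x 4*y 1 + m2*x 3*y 4 + m2*x 4*y 3,
  l1*x 0*y 0 - l1*x 2*y 2 + l2*x 1*y 0 - l2*x 3*y 2 + l3*x 0*y 2 + l3*x 2*y 0 + l4*x 1*y 2 + l4*x 3*y 0 - m1*x 0*y 4 - m1*x 4*y 0 - m2*x 2*y 4 - m2*x 4*y 2,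
  -l1*x 0*y 3 - l1*x 2*y 1 - l2*x 1*y 3 - l2*x 3*y 1 + l3*x 0*y 1 - l3*x 2*y 3 + l4*x 1*y 1 - l4*x 3*y 3 + m1*x 3*y 4 + m1*x 4*y 3 - m2*x 1*y 4 - m2*x 4*y 1,
  l1*x 0*y 2 + l1*x 2*y 0 + l2*x 1*y 2 + l2*x 3*y 0 - l3*x 0*y 0 + l3*x 2*y 2 - l4*x 1*y 0 + l4*x 3*y 2 - m1*x 2*y 4 - m1*x 4*y 2 + m2*x 0*y 4 + m2*x 4*y 0,
  m1*x 0*y 1 - m1*x 1*y 0 - m1*x 2*y 3 + m1*x 3*y 2 + m2*x 0*y 3 - m2*x 1*y 2 + m2*x 2*y 1 - m2*x 3*y 0]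

lemma E0 : E 0 = ![1,0,0,0,0] := by funext i; fin_cases i <;> simp [E]
lemma E1 : E 1 = ![0,1,0,0,0] := by funext i; fin_cases i <;> simp [E]
lemma E2 : E 2 = ![0,0,1,0,0] := by funext i; fin_cases i <;> simp [E]
lemma E3 : E 3 = ![0,0,0,1,0] := by funext i; fin_cases i <;> simp [E]
lemma E4 : E 4 = ![0,0,0,0,1] := by funext i; fin_cases i <;> simp [E]

theorem statement_11 (l1 l2 l3 l4 m1 m2 : ℝ)
    (nabla : V → V → V)
    (hkos : ∀ x y z : V, 2 * gB (nabla x y) z =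
      gB (brkt l1 l2 l3 l4 m1 m2 x y) z + gB (brkt l1 l2 l3 l4 m1 m2 z x) y +
        gB (brkt l1 l2 l3 l4 m1 m2 z y) x) :
    (∀ x y : V, Tors nabla x y = -Tors nabla y x) ∧
    (∀ x y : V, Tors nabla x y =
      Dconn nabla x y - Dconn nabla y x - brkt l1 l2 l3 l4 m1 m2 x y) ∧
    (∀ x y z : V, Dconn nabla x (Tors nabla y z) - Tors nabla (Dconn nabla x y) z -
      Tors nabla y (Dconn nabla x z) = 0) := by
  have hnab : ∀ x y : V, nabla x y = NN l1 l2 l3 l4 m1 m2 x y := by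
    intro x y
    funext i
    fin_cases i
    · have h := hkos x y (E 0); simp [gB, E0, brkt, NN] at h ⊢; linarith
    · have h := hkos x y (E 1); simp [gB, E1, brkt, NN] at h ⊢; linarith
    · have h := hkos x y (E 2); simp [gB, E2, brkt, NN] at h ⊢; linarith
    · have h := hkos x y (E 3); simp [gB, E3, brkt, NN] at h ⊢; linarith
    · have h := hkos x y (E 4); simp [gB, E4, brkt, NN] at h ⊢; linarith
  refine ⟨?_, ?_, ?_⟩
  · intro x y
    funext i
    simp only [Tors, hnab, xiV, E4]
    fin_cases i <;> simp [NN, gB, etaF] <;> ring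
  · intro x y
    funext i
    simp only [Tors, Dconn, hnab, xiV, E4]
    fin_cases i <;> simp [NN, gB, etaF, brkt] <;> ring
  · intro x y z
    funext i
    simp only [Tors, Dconn, hnab, xiV, E4]
    fin_cases i <;> simp [NN, gB, etaF] <;> ring
end
end

section
/- Write a = λ₁² + λ₂² − λ₃² − λ₄² and b = λ₁λ₃ + λ₂λ₄, and R_{ijkl} = R(Eᵢ,Eⱼ,E_k,E_l). Then: R₁₂₁₂ = R₃₄₃₄ = a + 3μ₁²; R₁₂₃₄ = R₃₄₁₂ = −a − 2μ₁² + μ₂²; R₁₄₁₄ = R₂₃₂₃ = −a + 3μ₂²; R₁₄₂₃ = R₂₃₁₄ = a + μ₁² − 2μ₂²; R₁₂₁₄ = −R₁₂₂₃ = −R₂₃₁₂ = R₂₃₃₄ = R₁₄₁₂ = −R₁₄₃₄ = −R₃₄₁₄ = R₃₄₂₃ = 2b + 3μ₁μ₂; R₁₃₂₄ = R₂₄₁₃ = −(μ₁² + μ₂²); R₁₅₃₅ = R₂₅₄₅ = −2μ₁μ₂; R₁₅₁₅ = R₂₅₂₅ = −R₃₅₃₅ = −R₄₅₄₅ = −μ₁²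 + μ₂². -/
noncomputable section

/-- Explicit Levi-Civita connection. -/
def Nb (l1 l2 l3 l4 m1 m2 : ℝ) (x y : V) : V :=
  ![-1 * l1 * x 0 * y 1 + l1 * x 2 * y 3 + -1 * l2 * x 1 * y 1 + l2 * x 3 * y 3 + -1 * l3 * x 0 * y 3 + -1 * l3 * x 2 * y 1 + -1 * l4 * x 1 * y 3 + -1 * l4 * x 3 * y 1 + m1 * x 1 * y 4 + m1 * x 4 * y 1 + m2 * x 3 * y 4 + m2 * x 4 * y 3,
    l1 * x 0 * y 0 + -1 * l1 * x 2 * y 2 + l2 * x 1 * y 0 + -1 * l2 * x 3 * y 2 + l3 * x 0 * y 2 + l3 * x 2 * y 0 + l4 * x 1 * y 2 + l4 * x 3 * y 0 + -1 * m1 * x 0 * y 4 + -1 * m1 * x 4 * y 0 + -1 * m2 * x 2 * y 4 + -1 * m2 * x 4 * y 2,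
    -1 * l1 * x 0 * y 3 + -1 * l1 * x 2 * y 1 + -1 * l2 * x 1 * y 3 + -1 * l2 * x 3 * y 1 + l3 * x 0 * y 1 + -1 * l3 * x 2 * y 3 + l4 * x 1 * y 1 + -1 * l4 * x 3 * y 3 + m1 * x 3 * y 4 + m1 * x 4 * y 3 + -1 * m2 * x 1 * y 4 + -1 * m2 * x 4 * y 1,
    l1 * x 0 * y 2 + l1 * x 2 * y 0 + l2 * x 1 * y 2 + l2 * x 3 * y 0 + -1 * l3 * x 0 * y 0 + l3 * x 2 * y 2 + -1 * l4 * x 1 * y 0 + l4 * x 3 * y 2 + -1 * m1 * x 2 * y 4 + -1 * m1 * x 4 * y 2 + m2 * x 0 * y 4 + m2 * x 4 * y 0,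
    m1 * x 0 * y 1 + -1 * m1 * x 1 * y 0 + -1 * m1 * x 2 * y 3 + m1 * x 3 * y 2 + m2 * x 0 * y 3 + -1 * m2 * x 1 * y 2 + m2 * x 2 * y 1 + -1 * m2 * x 3 * y 0]

set_option maxHeartbeats 4000000 in
theorem statement_12 (l1 l2 l3 l4 m1 m2 : ℝ)
    (nabla : V → V → V)
    (hkos : ∀ x y z : V, 2 * gB (nabla x y) z =
      gB (brkt l1 l2 l3 l4 m1 m2 x y) z + gB (brkt l1 l2 l3 l4 m1 m2 z x) y +
        gB (brkt l1 l2 l3 l4 m1 m2 z y) x) :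
    ∀ a b : ℝ, a = l1 ^ 2 + l2 ^ 2 - l3 ^ 2 - l4 ^ 2 → b = l1 * l3 + l2 * l4 →
(      curv4 (brkt l1 l2 l3 l4 m1 m2) nabla (E 0) (E 1) (E 0) (E 1) = a + 3 * m1 ^ 2 ∧
      curv4 (brkt l1 l2 l3 l4 m1 m2) nabla (E 2) (E 3) (E 2) (E 3) = a + 3 * m1 ^ 2 ∧
      curv4 (brkt l1 l2 l3 l4 m1 m2) nabla (E 0) (E 1) (E 2) (E 3) = -a - 2 * m1 ^ 2 + m2 ^ 2 ∧
      curv4 (brkt l1 l2 l3 l4 m1 m2) nabla (E 2) (E 3) (E 0) (E 1) = -a - 2 * m1 ^ 2 + m2 ^ 2 ∧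
      curv4 (brkt l1 l2 l3 l4 m1 m2) nabla (E 0) (E 3) (E 0) (E 3) = -a + 3 * m2 ^ 2 ∧
      curv4 (brkt l1 l2 l3 l4 m1 m2) nabla (E 1) (E 2) (E 1) (E 2) = -a + 3 * m2 ^ 2 ∧
      curv4 (brkt l1 l2 l3 l4 m1 m2) nabla (E 0) (E 3) (E 1) (E 2) = a + m1 ^ 2 - 2 * m2 ^ 2 ∧
      curv4 (brkt l1 l2 l3 l4 m1 m2) nabla (E 1) (E 2) (E 0) (E 3) = a + m1 ^ 2 - 2 * m2 ^ 2 ∧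
      curv4 (brkt l1 l2 l3 l4 m1 m2) nabla (E 0) (E 1) (E 0) (E 3) = 2 * b + 3 * m1 * m2 ∧
      -(curv4 (brkt l1 l2 l3 l4 m1 m2) nabla (E 0) (E 1) (E 1) (E 2)) = 2 * b + 3 * m1 * m2 ∧
      -(curv4 (brkt l1 l2 l3 l4 m1 m2) nabla (E 1) (E 2) (E 0) (E 1)) = 2 * b + 3 * m1 * m2 ∧
      curv4 (brkt l1 l2 l3 l4 m1 m2) nabla (E 1) (E 2) (E 2) (E 3) = 2 * b + 3 * m1 * m2 ∧
      curv4 (brkt l1 l2 l3 l4 m1 m2) nabla (E 0) (E 3) (E 0) (E 1) = 2 * b + 3 * m1 * m2 ∧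
      -(curv4 (brkt l1 l2 l3 l4 m1 m2) nabla (E 0) (E 3) (E 2) (E 3)) = 2 * b + 3 * m1 * m2 ∧
      -(curv4 (brkt l1 l2 l3 l4 m1 m2) nabla (E 2) (E 3) (E 0) (E 3)) = 2 * b + 3 * m1 * m2 ∧
      curv4 (brkt l1 l2 l3 l4 m1 m2) nabla (E 2) (E 3) (E 1) (E 2) = 2 * b + 3 * m1 * m2 ∧
      curv4 (brkt l1 l2 l3 l4 m1 m2) nabla (E 0) (E 2) (E 1) (E 3) = -(m1 ^ 2 + m2 ^ 2) ∧
      curv4 (brkt l1 l2 l3 l4 m1 m2) nabla (E 1) (E 3) (E 0) (E 2) = -(m1 ^ 2 + m2 ^ 2) ∧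
      curv4 (brkt l1 l2 l3 l4 m1 m2) nabla (E 0) (E 4) (E 2) (E 4) = -(2 * m1 * m2) ∧
      curv4 (brkt l1 l2 l3 l4 m1 m2) nabla (E 1) (E 4) (E 3) (E 4) = -(2 * m1 * m2) ∧
      curv4 (brkt l1 l2 l3 l4 m1 m2) nabla (E 0) (E 4) (E 0) (E 4) = -m1 ^ 2 + m2 ^ 2 ∧
      curv4 (brkt l1 l2 l3 l4 m1 m2) nabla (E 1) (E 4) (E 1) (E 4) = -m1 ^ 2 + m2 ^ 2 ∧
      -(curv4 (brkt l1 l2 l3 l4 m1 m2) nabla (E 2) (E 4) (E 2) (E 4)) = -m1 ^ 2 + m2 ^ 2 ∧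
      -(curv4 (brkt l1 l2 l3 l4 m1 m2) nabla (E 3) (E 4) (E 3) (E 4)) = -m1 ^ 2 + m2 ^ 2) := by
  intro a b ha hb
  have hN : nabla = Nb l1 l2 l3 l4 m1 m2 := by
    funext x y k
    have h := hkos x y (E k)
    fin_cases k <;>
      simp [gB, brkt, E, Nb, Pi.single_apply] at h ⊢ <;> linarith
  subst hN ha hb
  and_intros <;>
    · simp [curv4, curv, gB, brkt, E, Nb, Pi.single_apply]
      ring
end
end

section
/- Write a = λ₁² + λ₂² − λ₃² − λ₄² and b = λ₁λ₃ + λ₂λ₄, and K_{ijkl} = K(Eᵢ,Eⱼ,E_k,E_l). Then: K₁₂₁₂ = −K₁₂₃₄ = −K₃₄₁₂ = K₃₄₃₄ = a + 4μ₁²; K₁₄₁₄ = −K₁₄₂₃ = −K₂₃₁₄ = K₂₃₂₃ = −a + 4μ₂²; K₁₂₁₄ = −K₁₂₂₃ = −K₂₃₁₂ = K₂₃₃₄ = K₁₄₁₂ = −K₁₄₃₄ = −K₃₄₁₄ = K₃₄₂₃ = 2b + 4μ₁μ₂. -/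
noncomputable section

set_option maxHeartbeats 2000000 in
theorem statement_13 (l1 l2 l3 l4 m1 m2 : ℝ)
    (nabla : V → V → V)
    (hkos : ∀ x y z : V, 2 * gB (nabla x y) z =
      gB (brkt l1 l2 l3 l4 m1 m2 x y) z + gB (brkt l1 l2 l3 l4 m1 m2 z x) y +
        gB (brkt l1 l2 l3 l4 m1 m2 z y) x) :
    ∀ a b : ℝ, a = l1 ^ 2 + l2 ^ 2 - l3 ^ 2 - l4 ^ 2 → b = l1 * l3 + l2 * l4 →
(      curv4 (brkt l1 l2 l3 l4 m1 m2) (Dconn nabla) (E 0) (E 1) (E 0) (E 1) = a + 4 * m1 ^ 2 ∧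
      -(curv4 (brkt l1 l2 l3 l4 m1 m2) (Dconn nabla) (E 0) (E 1) (E 2) (E 3)) = a + 4 * m1 ^ 2 ∧
      -(curv4 (brkt l1 l2 l3 l4 m1 m2) (Dconn nabla) (E 2) (E 3) (E 0) (E 1)) = a + 4 * m1 ^ 2 ∧
      curv4 (brkt l1 l2 l3 l4 m1 m2) (Dconn nabla) (E 2) (E 3) (E 2) (E 3) = a + 4 * m1 ^ 2 ∧
      curv4 (brkt l1 l2 l3 l4 m1 m2) (Dconn nabla) (E 0) (E 3) (E 0) (E 3) = -a + 4 * m2 ^ 2 ∧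
      -(curv4 (brkt l1 l2 l3 l4 m1 m2) (Dconn nabla) (E 0) (E 3) (E 1) (E 2)) = -a + 4 * m2 ^ 2 ∧
      -(curv4 (brkt l1 l2 l3 l4 m1 m2) (Dconn nabla) (E 1) (E 2) (E 0) (E 3)) = -a + 4 * m2 ^ 2 ∧
      curv4 (brkt l1 l2 l3 l4 m1 m2) (Dconn nabla) (E 1) (E 2) (E 1) (E 2) = -a + 4 * m2 ^ 2 ∧
      curv4 (brkt l1 l2 l3 l4 m1 m2) (Dconn nabla) (E 0) (E 1) (E 0) (E 3) = 2 * b + 4 * m1 * m2 ∧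
      -(curv4 (brkt l1 l2 l3 l4 m1 m2) (Dconn nabla) (E 0) (E 1) (E 1) (E 2)) = 2 * b + 4 * m1 * m2 ∧
      -(curv4 (brkt l1 l2 l3 l4 m1 m2) (Dconn nabla) (E 1) (E 2) (E 0) (E 1)) = 2 * b + 4 * m1 * m2 ∧
      curv4 (brkt l1 l2 l3 l4 m1 m2) (Dconn nabla) (E 1) (E 2) (E 2) (E 3) = 2 * b + 4 * m1 * m2 ∧
      curv4 (brkt l1 l2 l3 l4 m1 m2) (Dconn nabla) (E 0) (E 3) (E 0) (E 1) = 2 * b + 4 * m1 * m2 ∧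
      -(curv4 (brkt l1 l2 l3 l4 m1 m2) (Dconn nabla) (E 0) (E 3) (E 2) (E 3)) = 2 * b + 4 * m1 * m2 ∧
      -(curv4 (brkt l1 l2 l3 l4 m1 m2) (Dconn nabla) (E 2) (E 3) (E 0) (E 3)) = 2 * b + 4 * m1 * m2 ∧
      curv4 (brkt l1 l2 l3 l4 m1 m2) (Dconn nabla) (E 2) (E 3) (E 1) (E 2) = 2 * b + 4 * m1 * m2) := by
  intro a b ha hb
  have hE0 : (E 0 : V) = ![1,0,0,0,0] := by funext j; fin_cases j <;> simp [E, Pi.single_apply]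
  have hE1 : (E 1 : V) = ![0,1,0,0,0] := by funext j; fin_cases j <;> simp [E, Pi.single_apply]
  have hE2 : (E 2 : V) = ![0,0,1,0,0] := by funext j; fin_cases j <;> simp [E, Pi.single_apply]
  have hE3 : (E 3 : V) = ![0,0,0,1,0] := by funext j; fin_cases j <;> simp [E, Pi.single_apply]
  have hE4 : (E 4 : V) = ![0,0,0,0,1] := by funext j; fin_cases j <;> simp [E, Pi.single_apply]
  have hN0 : ∀ x y : V, nabla x y 0 =
      ((gB (brkt l1 l2 l3 l4 m1 m2 x y) (E 0) + gB (brkt l1 l2 l3 l4 m1 m2 (E 0) x) y +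
        gB (brkt l1 l2 l3 l4 m1 m2 (E 0) y) x) / 2) := by
    intro x y
    have h := hkos x y (E 0)
    simp only [hE0, gB, brkt, Matrix.smul_cons, Matrix.smul_empty, smul_eq_mul, Pi.add_apply,
      Matrix.cons_val_zero, Matrix.cons_val_one, Matrix.head_cons, Matrix.cons_val_two,
      Matrix.tail_cons, Matrix.cons_val_three, Matrix.cons_val_four, Matrix.cons_val_fin_one] at h ⊢
    linarith
  have hN1 : ∀ x y : V, nabla x y 1 =
      ((gB (brkt l1 l2 l3 l4 m1 m2 x y) (E 1) + gB (brkt l1 l2 l3 l4 m1 m2 (E 1) x) y +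
        gB (brkt l1 l2 l3 l4 m1 m2 (E 1) y) x) / 2) := by
    intro x y
    have h := hkos x y (E 1)
    simp only [hE1, gB, brkt, Matrix.smul_cons, Matrix.smul_empty, smul_eq_mul, Pi.add_apply,
      Matrix.cons_val_zero, Matrix.cons_val_one, Matrix.head_cons, Matrix.cons_val_two,
      Matrix.tail_cons, Matrix.cons_val_three, Matrix.cons_val_four, Matrix.cons_val_fin_one] at h ⊢
    linarith
  have hN2 : ∀ x y : V, nabla x y 2 =
      -((gB (brkt l1 l2 l3 l4 m1 m2 x y) (E 2) + gB (brkt l1 l2 l3 l4 m1 m2 (E 2) x) y +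
        gB (brkt l1 l2 l3 l4 m1 m2 (E 2) y) x) / 2) := by
    intro x y
    have h := hkos x y (E 2)
    simp only [hE2, gB, brkt, Matrix.smul_cons, Matrix.smul_empty, smul_eq_mul, Pi.add_apply,
      Matrix.cons_val_zero, Matrix.cons_val_one, Matrix.head_cons, Matrix.cons_val_two,
      Matrix.tail_cons, Matrix.cons_val_three, Matrix.cons_val_four, Matrix.cons_val_fin_one] at h ⊢
    linarith
  have hN3 : ∀ x y : V, nabla x y 3 =
      -((gB (brkt l1 l2 l3 l4 m1 m2 x y) (E 3) + gB (brkt l1 l2 l3 l4 m1 m2 (E 3) x) y +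
        gB (brkt l1 l2 l3 l4 m1 m2 (E 3) y) x) / 2) := by
    intro x y
    have h := hkos x y (E 3)
    simp only [hE3, gB, brkt, Matrix.smul_cons, Matrix.smul_empty, smul_eq_mul, Pi.add_apply,
      Matrix.cons_val_zero, Matrix.cons_val_one, Matrix.head_cons, Matrix.cons_val_two,
      Matrix.tail_cons, Matrix.cons_val_three, Matrix.cons_val_four, Matrix.cons_val_fin_one] at h ⊢
    linarith
  have hN4 : ∀ x y : V, nabla x y 4 =
      ((gB (brkt l1 l2 l3 l4 m1 m2 x y) (E 4) + gB (brkt l1 l2 l3 l4 m1 m2 (E 4) x) y +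
        gB (brkt l1 l2 l3 l4 m1 m2 (E 4) y) x) / 2) := by
    intro x y
    have h := hkos x y (E 4)
    simp only [hE4, gB, brkt, Matrix.smul_cons, Matrix.smul_empty, smul_eq_mul, Pi.add_apply,
      Matrix.cons_val_zero, Matrix.cons_val_one, Matrix.head_cons, Matrix.cons_val_two,
      Matrix.tail_cons, Matrix.cons_val_three, Matrix.cons_val_four, Matrix.cons_val_fin_one] at h ⊢
    linarith
  have hD0 : ∀ x y : V, Dconn nabla x y 0 = (-1) * l1 * x 0 * y 1 + l1 * x 2 * y 3 + (-1) * l2 * x 1 * y 1 + l2 * x 3 * y 3 + (-1) * l3 * x 0 * y 3 + (-1) * l3 * x 2 * y 1 + (-1) * l4 * x 1 * y 3 + (-1) * l4 * x 3 * y 1 + 2 * m1 * x 4 * y 1 + 2 * m2 * x 4 * y 3 := by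
    intro x y
    simp only [Dconn, Tors, etaF, xiV, hN0, hN1, hN2, hN3, hN4, gB, brkt, hE0, hE1, hE2, hE3, hE4,
      Matrix.smul_cons, Matrix.smul_empty, smul_eq_mul, Pi.add_apply, Pi.sub_apply,
      Pi.smul_apply, Matrix.cons_val_zero, Matrix.cons_val_one, Matrix.head_cons,
      Matrix.cons_val_two, Matrix.tail_cons, Matrix.cons_val_three, Matrix.cons_val_four,
      Matrix.cons_val_fin_one]
    ring
  have hD1 : ∀ x y : V, Dconn nabla x y 1 = l1 * x 0 * y 0 + (-1) * l1 * x 2 * y 2 + l2 * x 1 * y 0 + (-1) * l2 * x 3 * y 2 + l3 * x 0 * y 2 + l3 * x 2 * y 0 + l4 * x 1 * y 2 + l4 * x 3 * y 0 + (-2) * m1 * x 4 * y 0 + (-2) * m2 * x 4 * y 2 := by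
    intro x y
    simp only [Dconn, Tors, etaF, xiV, hN0, hN1, hN2, hN3, hN4, gB, brkt, hE0, hE1, hE2, hE3, hE4,
      Matrix.smul_cons, Matrix.smul_empty, smul_eq_mul, Pi.add_apply, Pi.sub_apply,
      Pi.smul_apply, Matrix.cons_val_zero, Matrix.cons_val_one, Matrix.head_cons,
      Matrix.cons_val_two, Matrix.tail_cons, Matrix.cons_val_three, Matrix.cons_val_four,
      Matrix.cons_val_fin_one]
    ring
  have hD2 : ∀ x y : V, Dconn nabla x y 2 = (-1) * l1 * x 0 * y 3 + (-1) * l1 * x 2 * y 1 + (-1) * l2 * x 1 * y 3 + (-1) * l2 * x 3 * y 1 + l3 * x 0 * y 1 + (-1) * l3 * x 2 * y 3 + l4 * x 1 * y 1 + (-1) * l4 * x 3 * y 3 + 2 * m1 * x 4 * y 3 + (-2) * m2 * x 4 * y 1 := by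
    intro x y
    simp only [Dconn, Tors, etaF, xiV, hN0, hN1, hN2, hN3, hN4, gB, brkt, hE0, hE1, hE2, hE3, hE4,
      Matrix.smul_cons, Matrix.smul_empty, smul_eq_mul, Pi.add_apply, Pi.sub_apply,
      Pi.smul_apply, Matrix.cons_val_zero, Matrix.cons_val_one, Matrix.head_cons,
      Matrix.cons_val_two, Matrix.tail_cons, Matrix.cons_val_three, Matrix.cons_val_four,
      Matrix.cons_val_fin_one]
    ring
  have hD3 : ∀ x y : V, Dconn nabla x y 3 = l1 * x 0 * y 2 + l1 * x 2 * y 0 + l2 * x 1 * y 2 + l2 * x 3 * y 0 + (-1) * l3 * x 0 * y 0 + l3 * x 2 * y 2 + (-1) * l4 * x 1 * y 0 + l4 * x 3 * y 2 + (-2) * m1 * x 4 * y 2 + 2 * m2 * x 4 * y 0 := by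
    intro x y
    simp only [Dconn, Tors, etaF, xiV, hN0, hN1, hN2, hN3, hN4, gB, brkt, hE0, hE1, hE2, hE3, hE4,
      Matrix.smul_cons, Matrix.smul_empty, smul_eq_mul, Pi.add_apply, Pi.sub_apply,
      Pi.smul_apply, Matrix.cons_val_zero, Matrix.cons_val_one, Matrix.head_cons,
      Matrix.cons_val_two, Matrix.tail_cons, Matrix.cons_val_three, Matrix.cons_val_four,
      Matrix.cons_val_fin_one]
    ring
  have hD4 : ∀ x y : V, Dconn nabla x y 4 = 0 := by
    intro x y
    simp only [Dconn, Tors, etaF, xiV, hN0, hN1, hN2, hN3, hN4, gB, brkt, hE0, hE1, hE2, hE3, hE4,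
      Matrix.smul_cons, Matrix.smul_empty, smul_eq_mul, Pi.add_apply, Pi.sub_apply,
      Pi.smul_apply, Matrix.cons_val_zero, Matrix.cons_val_one, Matrix.head_cons,
      Matrix.cons_val_two, Matrix.tail_cons, Matrix.cons_val_three, Matrix.cons_val_four,
      Matrix.cons_val_fin_one]
    ring
  subst ha hb
  refine ⟨?_, ?_, ?_, ?_, ?_, ?_, ?_, ?_, ?_, ?_, ?_, ?_, ?_, ?_, ?_, ?_⟩ <;>
    (simp only [curv4, curv, gB, hD0, hD1, hD2, hD3, hD4, brkt, hE0, hE1, hE2, hE3, hE4,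
      Matrix.smul_cons, Matrix.smul_empty, smul_eq_mul, Pi.add_apply, Pi.sub_apply,
      Pi.smul_apply, Matrix.cons_val_zero, Matrix.cons_val_one, Matrix.head_cons,
      Matrix.cons_val_two, Matrix.tail_cons, Matrix.cons_val_three, Matrix.cons_val_four,
      Matrix.cons_val_fin_one];
     ring)
end
end

section
/- Write a = λ₁² + λ₂² − λ₃² − λ₄². The scalar curvatures are τ = −8a − 4(μ₁² − μ₂²) and τᴰ = −8a − 16(μ₁² − μ₂²). -/
noncomputable section

def Fc (l1 l2 l3 l4 m1 m2 : ℝ) (x y : V) : V := fun k =>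
  eps k * (1 / 2) * (gB (brkt l1 l2 l3 l4 m1 m2 x y) (E k) +
    gB (brkt l1 l2 l3 l4 m1 m2 (E k) x) y + gB (brkt l1 l2 l3 l4 m1 m2 (E k) y) x)

set_option maxHeartbeats 2000000 in
theorem statement_16 (l1 l2 l3 l4 m1 m2 : ℝ)
    (nabla : V → V → V)
    (hkos : ∀ x y z : V, 2 * gB (nabla x y) z =
      gB (brkt l1 l2 l3 l4 m1 m2 x y) z + gB (brkt l1 l2 l3 l4 m1 m2 z x) y +
        gB (brkt l1 l2 l3 l4 m1 m2 z y) x) :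
    ∀ a : ℝ, a = l1 ^ 2 + l2 ^ 2 - l3 ^ 2 - l4 ^ 2 →
      (scal (brkt l1 l2 l3 l4 m1 m2) nabla = -8 * a - 4 * (m1 ^ 2 - m2 ^ 2) ∧
      scal (brkt l1 l2 l3 l4 m1 m2) (Dconn nabla) = -8 * a - 16 * (m1 ^ 2 - m2 ^ 2)) := by
  have hn : nabla = Fc l1 l2 l3 l4 m1 m2 := by
    funext x y
    funext k
    have h := hkos x y (E k)
    fin_cases k <;>
      simp [Fc, gB, E, brkt, eps, Pi.single_apply] at h ⊢ <;> linarith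
  subst hn
  intro a ha
  subst ha
  constructor <;>
  · simp only [scal, curv4, curv, Dconn, Tors, Fc, gB, brkt, etaF, xiV, E, eps,
      Fin.sum_univ_five, Pi.single_apply, Pi.add_apply, Pi.sub_apply, Pi.smul_apply,
      smul_eq_mul, Matrix.cons_val_zero, Matrix.cons_val_one, Matrix.head_cons,
      Matrix.cons_val_two, Matrix.tail_cons, Matrix.cons_val_three, Matrix.cons_val_four,
      Fin.reduceEq, reduceIte, mul_one, mul_zero, zero_mul, one_mul, add_zero, zero_add,
      sub_zero, zero_sub, neg_zero, mul_neg, neg_neg, neg_mul]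
    ring
end
end

section
/- The square norm of ∇φ equals ‖∇φ‖² = −8(μ₁² − μ₂²). -/
noncomputable section

set_option maxHeartbeats 4000000 in
theorem statement_17 (l1 l2 l3 l4 m1 m2 : ℝ)
    (nabla : V → V → V)
    (hkos : ∀ x y z : V, 2 * gB (nabla x y) z =
      gB (brkt l1 l2 l3 l4 m1 m2 x y) z + gB (brkt l1 l2 l3 l4 m1 m2 z x) y +
        gB (brkt l1 l2 l3 l4 m1 m2 z y) x) :
    sqnormNphi nabla = -8 * (m1 ^ 2 - m2 ^ 2) := by
  have hg : ∀ (v : V) (j : Fin 5), gB v (E j) = eps j * v j := by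
    intro v j
    fin_cases j <;> simp [gB, E, eps, Pi.single_apply]
  have hval : ∀ (x y : V) (j : Fin 5), nabla x y j =
      eps j * (gB (brkt l1 l2 l3 l4 m1 m2 x y) (E j) +
        gB (brkt l1 l2 l3 l4 m1 m2 (E j) x) y +
        gB (brkt l1 l2 l3 l4 m1 m2 (E j) y) x) / 2 := by
    intro x y j
    have h := hkos x y (E j)
    rw [hg] at h
    fin_cases j <;> simp [eps] at h ⊢ <;> linarith
  have hnab : ∀ x y : V, nabla x y = ![
      m2 * x 4 * y 3 + m2 * x 3 * y 4 + m1 * x 4 * y 1 + m1 * x 1 * y 4 - 1 * l4 * x 3 * y 1 - 1 * l4 * x 1 * y 3 - 1 * l3 * x 2 * y 1 - 1 * l3 * x 0 * y 3 + l2 * x 3 * y 3 - 1 * l2 * x 1 * y 1 + l1 * x 2 * y 3 - 1 * l1 * x 0 * y 1,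
      -1 * m2 * x 4 * y 2 - 1 * m2 * x 2 * y 4 - 1 * m1 * x 4 * y 0 - 1 * m1 * x 0 * y 4 + l4 * x 3 * y 0 + l4 * x 1 * y 2 + l3 * x 2 * y 0 + l3 * x 0 * y 2 - 1 * l2 * x 3 * y 2 + l2 * x 1 * y 0 - 1 * l1 * x 2 * y 2 + l1 * x 0 * y 0,
      -1 * m2 * x 4 * y 1 - 1 * m2 * x 1 * y 4 + m1 * x 4 * y 3 + m1 * x 3 * y 4 - 1 * l4 * x 3 * y 3 + l4 * x 1 * y 1 - 1 * l3 * x 2 * y 3 + l3 * x 0 * y 1 - 1 * l2 * x 3 * y 1 - 1 * l2 * x 1 * y 3 - 1 * l1 * x 2 * y 1 - 1 * l1 * x 0 * y 3,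
      m2 * x 4 * y 0 + m2 * x 0 * y 4 - 1 * m1 * x 4 * y 2 - 1 * m1 * x 2 * y 4 + l4 * x 3 * y 2 - 1 * l4 * x 1 * y 0 + l3 * x 2 * y 2 - 1 * l3 * x 0 * y 0 + l2 * x 3 * y 0 + l2 * x 1 * y 2 + l1 * x 2 * y 0 + l1 * x 0 * y 2,
      -1 * m2 * x 3 * y 0 + m2 * x 2 * y 1 - 1 * m2 * x 1 * y 2 + m2 * x 0 * y 3 + m1 * x 3 * y 2 - 1 * m1 * x 2 * y 3 - 1 * m1 * x 1 * y 0 + m1 * x 0 * y 1] := by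
    intro x y
    funext j
    fin_cases j <;>
      simp [hval, gB, brkt, E, eps, Pi.single_apply] <;> ring
  have h00 : nphi nabla (E 0) (E 0) = ![0, 0, 0, 0, 0] := by
    funext j
    fin_cases j <;>
      simp [nphi, hnab, E, gB, phiV, Pi.single_apply] <;> ring
  have h01 : nphi nabla (E 0) (E 1) = ![0, 0, 0, 0, m2] := by
    funext j
    fin_cases j <;>
      simp [nphi, hnab, E, gB, phiV, Pi.single_apply] <;> ring
  have h02 : nphi nabla (E 0) (E 2) = ![0, 0, 0, 0, 0] := by
    funext j
    fin_cases j <;>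
      simp [nphi, hnab, E, gB, phiV, Pi.single_apply] <;> ring
  have h03 : nphi nabla (E 0) (E 3) = ![0, 0, 0, 0, -1*m1] := by
    funext j
    fin_cases j <;>
      simp [nphi, hnab, E, gB, phiV, Pi.single_apply] <;> ring
  have h04 : nphi nabla (E 0) (E 4) = ![0, m2, 0, m1, 0] := by
    funext j
    fin_cases j <;>
      simp [nphi, hnab, E, gB, phiV, Pi.single_apply] <;> ring
  have h10 : nphi nabla (E 1) (E 0) = ![0, 0, 0, 0, -1*m2] := by
    funext j
    fin_cases j <;>
      simp [nphi, hnab, E, gB, phiV, Pi.single_apply] <;> ring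
  have h11 : nphi nabla (E 1) (E 1) = ![0, 0, 0, 0, 0] := by
    funext j
    fin_cases j <;>
      simp [nphi, hnab, E, gB, phiV, Pi.single_apply] <;> ring
  have h12 : nphi nabla (E 1) (E 2) = ![0, 0, 0, 0, m1] := by
    funext j
    fin_cases j <;>
      simp [nphi, hnab, E, gB, phiV, Pi.single_apply] <;> ring
  have h13 : nphi nabla (E 1) (E 3) = ![0, 0, 0, 0, 0] := by
    funext j
    fin_cases j <;>
      simp [nphi, hnab, E, gB, phiV, Pi.single_apply] <;> ring
  have h14 : nphi nabla (E 1) (E 4) = ![-1*m2, 0, -1*m1, 0, 0] := by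
    funext j
    fin_cases j <;>
      simp [nphi, hnab, E, gB, phiV, Pi.single_apply] <;> ring
  have h20 : nphi nabla (E 2) (E 0) = ![0, 0, 0, 0, 0] := by
    funext j
    fin_cases j <;>
      simp [nphi, hnab, E, gB, phiV, Pi.single_apply] <;> ring
  have h21 : nphi nabla (E 2) (E 1) = ![0, 0, 0, 0, -1*m1] := by
    funext j
    fin_cases j <;>
      simp [nphi, hnab, E, gB, phiV, Pi.single_apply] <;> ring
  have h22 : nphi nabla (E 2) (E 2) = ![0, 0, 0, 0, 0] := by
    funext j
    fin_cases j <;>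
      simp [nphi, hnab, E, gB, phiV, Pi.single_apply] <;> ring
  have h23 : nphi nabla (E 2) (E 3) = ![0, 0, 0, 0, -1*m2] := by
    funext j
    fin_cases j <;>
      simp [nphi, hnab, E, gB, phiV, Pi.single_apply] <;> ring
  have h24 : nphi nabla (E 2) (E 4) = ![0, -1*m1, 0, m2, 0] := by
    funext j
    fin_cases j <;>
      simp [nphi, hnab, E, gB, phiV, Pi.single_apply] <;> ring
  have h30 : nphi nabla (E 3) (E 0) = ![0, 0, 0, 0, m1] := by
    funext j
    fin_cases j <;>
      simp [nphi, hnab, E, gB, phiV, Pi.single_apply] <;> ring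
  have h31 : nphi nabla (E 3) (E 1) = ![0, 0, 0, 0, 0] := by
    funext j
    fin_cases j <;>
      simp [nphi, hnab, E, gB, phiV, Pi.single_apply] <;> ring
  have h32 : nphi nabla (E 3) (E 2) = ![0, 0, 0, 0, m2] := by
    funext j
    fin_cases j <;>
      simp [nphi, hnab, E, gB, phiV, Pi.single_apply] <;> ring
  have h33 : nphi nabla (E 3) (E 3) = ![0, 0, 0, 0, 0] := by
    funext j
    fin_cases j <;>
      simp [nphi, hnab, E, gB, phiV, Pi.single_apply] <;> ring
  have h34 : nphi nabla (E 3) (E 4) = ![m1, 0, -1*m2, 0, 0] := by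
    funext j
    fin_cases j <;>
      simp [nphi, hnab, E, gB, phiV, Pi.single_apply] <;> ring
  have h40 : nphi nabla (E 4) (E 0) = ![0, 0, 0, 0, 0] := by
    funext j
    fin_cases j <;>
      simp [nphi, hnab, E, gB, phiV, Pi.single_apply] <;> ring
  have h41 : nphi nabla (E 4) (E 1) = ![0, 0, 0, 0, 0] := by
    funext j
    fin_cases j <;>
      simp [nphi, hnab, E, gB, phiV, Pi.single_apply] <;> ring
  have h42 : nphi nabla (E 4) (E 2) = ![0, 0, 0, 0, 0] := by
    funext j
    fin_cases j <;>
      simp [nphi, hnab, E, gB, phiV, Pi.single_apply] <;> ring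
  have h43 : nphi nabla (E 4) (E 3) = ![0, 0, 0, 0, 0] := by
    funext j
    fin_cases j <;>
      simp [nphi, hnab, E, gB, phiV, Pi.single_apply] <;> ring
  have h44 : nphi nabla (E 4) (E 4) = ![0, 0, 0, 0, 0] := by
    funext j
    fin_cases j <;>
      simp [nphi, hnab, E, gB, phiV, Pi.single_apply] <;> ring
  simp only [sqnormNphi, Fin.sum_univ_five, h00, h01, h02, h03, h04, h10, h11, h12, h13, h14, h20, h21, h22, h23, h24, h30, h31, h32, h33, h34, h40, h41, h42, h43, h44]
  norm_num [gB, eps, Matrix.cons_val_zero, Matrix.cons_val_one, Matrix.cons_val_two, Matrix.cons_val_three, Matrix.cons_val_four, Matrix.vecHead, Matrix.vecTail]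
  ring
end
end

section
/- The following conditions are equivalent: (i) ‖∇φ‖² = 0 (the manifold is an isotropic-F₀-manifold); (ii) τ = τᴰ (the scalar curvatures for ∇ and D are equal); (iii) the vectors ∇_{Eᵢ}ξ for i = 1,2,3,4 are isotropic, i.e. g(∇_{Eᵢ}ξ, ∇_{Eᵢ}ξ) = 0 for i = 1,2,3,4; (iv) μ₁ = μ₂ or μ₁ = −μ₂. -/
set_option maxHeartbeats 4000000
set_option maxRecDepth 100000
noncomputable section

def Nab (l1 l2 l3 l4 m1 m2 : ℝ) (x y : V) : V :=
  ![(-l1) * x 0 * y 1 + (-l3) * x 0 * y 3 + (-l2) * x 1 * y 1 + (-l4) * x 1 * y 3 + (m1) * x 1 * y 4 + (-l3) * x 2 * y 1 + (l1) * x 2 * y 3 + (-l4) * x 3 * y 1 + (l2) * x 3 * y 3 + (m2) * x 3 * y 4 + (m1) * x 4 * y 1 + (m2) * x 4 * y 3,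
    (l1) * x 0 * y 0 + (l3) * x 0 * y 2 + (-m1) * x 0 * y 4 + (l2) * x 1 * y 0 + (l4) * x 1 * y 2 + (l3) * x 2 * y 0 + (-l1) * x 2 * y 2 + (-m2) * x 2 * y 4 + (l4) * x 3 * y 0 + (-l2) * x 3 * y 2 + (-m1) * x 4 * y 0 + (-m2) * x 4 * y 2,
    (l3) * x 0 * y 1 + (-l1) * x 0 * y 3 + (l4) * x 1 * y 1 + (-l2) * x 1 * y 3 + (-m2) * x 1 * y 4 + (-l1) * x 2 * y 1 + (-l3) * x 2 * y 3 + (-l2) * x 3 * y 1 + (-l4) * x 3 * y 3 + (m1) * x 3 * y 4 + (-m2) * x 4 * y 1 + (m1) * x 4 * y 3,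
    (-l3) * x 0 * y 0 + (l1) * x 0 * y 2 + (m2) * x 0 * y 4 + (-l4) * x 1 * y 0 + (l2) * x 1 * y 2 + (l1) * x 2 * y 0 + (l3) * x 2 * y 2 + (-m1) * x 2 * y 4 + (l2) * x 3 * y 0 + (l4) * x 3 * y 2 + (m2) * x 4 * y 0 + (-m1) * x 4 * y 2,
    (m1) * x 0 * y 1 + (m2) * x 0 * y 3 + (-m1) * x 1 * y 0 + (-m2) * x 1 * y 2 + (m2) * x 2 * y 1 + (-m1) * x 2 * y 3 + (-m2) * x 3 * y 0 + (m1) * x 3 * y 2]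

theorem statement_18 (l1 l2 l3 l4 m1 m2 : ℝ)
    (nabla : V → V → V)
    (hkos : ∀ x y z : V, 2 * gB (nabla x y) z =
      gB (brkt l1 l2 l3 l4 m1 m2 x y) z + gB (brkt l1 l2 l3 l4 m1 m2 z x) y +
        gB (brkt l1 l2 l3 l4 m1 m2 z y) x) :
    ((sqnormNphi nabla = 0) ↔
      (scal (brkt l1 l2 l3 l4 m1 m2) nabla = scal (brkt l1 l2 l3 l4 m1 m2) (Dconn nabla))) ∧
    ((sqnormNphi nabla = 0) ↔
      (∀ i : Fin 4, gB (nabla (E i.castSucc) xiV) (nabla (E i.castSucc) xiV) = 0)) ∧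
    ((sqnormNphi nabla = 0) ↔ (m1 = m2 ∨ m1 = -m2)) := by

  have hnab : nabla = Nab l1 l2 l3 l4 m1 m2 := by
    funext x y
    funext k
    have hk := hkos x y (E k)
    fin_cases k <;>
      simp +decide [brkt, gB, E, Nab, Pi.single_apply, Fin.ext_iff, Pi.add_apply, Pi.smul_apply,
        smul_eq_mul] at hk ⊢ <;>
      first | linear_combination hk / 2 | linear_combination -hk / 2
  rw [hnab]
  have hsq : sqnormNphi (Nab l1 l2 l3 l4 m1 m2) = 8 * m2 ^ 2 - 8 * m1 ^ 2 := by
    simp +decide [-Fin.val_eq_zero_iff, sqnormNphi, nphi, Nab, phiV, gB, E, eps, Fin.sum_univ_five, Pi.single_apply,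
      Fin.ext_iff, Pi.sub_apply]
    ring
  have htau : scal (brkt l1 l2 l3 l4 m1 m2) (Nab l1 l2 l3 l4 m1 m2) =
      4 * m2 ^ 2 - 4 * m1 ^ 2 + 8 * l4 ^ 2 + 8 * l3 ^ 2 - 8 * l2 ^ 2 - 8 * l1 ^ 2 := by
    simp +decide [-Fin.val_eq_zero_iff, scal, curv4, curv, Nab, brkt, gB, E, eps, Fin.sum_univ_five, Pi.single_apply, Fin.ext_iff,
      Pi.sub_apply, Pi.add_apply, Pi.smul_apply, smul_eq_mul]
    ring
  have htauD : scal (brkt l1 l2 l3 l4 m1 m2) (Dconn (Nab l1 l2 l3 l4 m1 m2)) =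
      16 * m2 ^ 2 - 16 * m1 ^ 2 + 8 * l4 ^ 2 + 8 * l3 ^ 2 - 8 * l2 ^ 2 - 8 * l1 ^ 2 := by
    simp +decide [-Fin.val_eq_zero_iff, scal, curv4, curv, Dconn, Tors, Nab, brkt, gB, etaF, xiV, E, eps, Fin.sum_univ_five, Fin.ext_iff,
      Pi.single_apply, Pi.sub_apply, Pi.add_apply, Pi.smul_apply, smul_eq_mul]
    simp +decide [Matrix.vecHead, Matrix.vecTail, Function.comp, Pi.smul_apply, Pi.single_apply,
      Fin.ext_iff, smul_eq_mul]
    ring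
  have hval : ∀ j : Fin 5, j ≠ 4 → gB (Nab l1 l2 l3 l4 m1 m2 (E j) xiV)
      (Nab l1 l2 l3 l4 m1 m2 (E j) xiV) = eps j * (m1 ^ 2 - m2 ^ 2) := by
    intro j hj
    fin_cases j <;>
      first
        | exact absurd rfl hj
        | (simp +decide [Nab, gB, xiV, E, eps, Pi.single_apply, Fin.ext_iff]; ring)
  refine ⟨?_, ?_, ?_⟩
  · rw [hsq, htau, htauD]
    constructor <;> intro h <;> linarith
  · rw [hsq]
    constructor
    · intro h i
      have h4 : i.castSucc ≠ (4 : Fin 5) := by simp [Fin.ext_iff]; omega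
      rw [hval i.castSucc h4]
      have : m1 ^ 2 - m2 ^ 2 = 0 := by linarith
      rw [this, mul_zero]
    · intro h
      have h0 := h 0
      rw [Fin.castSucc_zero, hval 0 (by decide)] at h0
      simp +decide [eps] at h0
      linarith
  · rw [hsq]
    constructor
    · intro h
      have : (m1 - m2) * (m1 + m2) = 0 := by nlinarith
      rcases mul_eq_zero.mp this with h' | h'
      · left; linarith
      · right; linarith
    · rintro (rfl | rfl) <;> ring
end
end

section
/- The manifold is Einsteinian, i.e. there exists c ∈ ℝ with ρ(x,y) = c·g(x,y) for all x,y ∈ V, if and only if μ₁μ₂ = −(λ₁λ₃ + λ₂λ₄) and μ₁² − μ₂² = −(1/3)(λ₁² + λ₂² − λ₃² − λ₄²). -/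
noncomputable section

/-- Explicit Levi-Civita connection determined by the Koszul formula. -/
def Nf (l1 l2 l3 l4 m1 m2 : ℝ) (x y : V) : V :=
  ![ m2*x 4*y 3 + m2*x 3*y 4 + m1*x 4*y 1 + m1*x 1*y 4 - l4*x 3*y 1 - l4*x 1*y 3
      - l3*x 2*y 1 - l3*x 0*y 3 + l2*x 3*y 3 - l2*x 1*y 1 + l1*x 2*y 3 - l1*x 0*y 1,
     -m2*x 4*y 2 - m2*x 2*y 4 - m1*x 4*y 0 - m1*x 0*y 4 + l4*x 3*y 0 + l4*x 1*y 2
      + l3*x 2*y 0 + l3*x 0*y 2 - l2*x 3*y 2 + l2*x 1*y 0 - l1*x 2*y 2 + l1*x 0*y 0,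
     -m2*x 4*y 1 - m2*x 1*y 4 + m1*x 4*y 3 + m1*x 3*y 4 - l4*x 3*y 3 + l4*x 1*y 1
      - l3*x 2*y 3 + l3*x 0*y 1 - l2*x 3*y 1 - l2*x 1*y 3 - l1*x 2*y 1 - l1*x 0*y 3,
     m2*x 4*y 0 + m2*x 0*y 4 - m1*x 4*y 2 - m1*x 2*y 4 + l4*x 3*y 2 - l4*x 1*y 0
      + l3*x 2*y 2 - l3*x 0*y 0 + l2*x 3*y 0 + l2*x 1*y 2 + l1*x 2*y 0 + l1*x 0*y 2,
     -m2*x 3*y 0 + m2*x 2*y 1 - m2*x 1*y 2 + m2*x 0*y 3 + m1*x 3*y 2 - m1*x 2*y 3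
      - m1*x 1*y 0 + m1*x 0*y 1 ]

set_option maxHeartbeats 2000000 in
theorem statement_19 (l1 l2 l3 l4 m1 m2 : ℝ)
    (nabla : V → V → V)
    (hkos : ∀ x y z : V, 2 * gB (nabla x y) z =
      gB (brkt l1 l2 l3 l4 m1 m2 x y) z + gB (brkt l1 l2 l3 l4 m1 m2 z x) y +
        gB (brkt l1 l2 l3 l4 m1 m2 z y) x) :
    (∃ c : ℝ, ∀ x y : V, ricci (brkt l1 l2 l3 l4 m1 m2) nabla x y = c * gB x y) ↔
      (m1 * m2 = -(l1 * l3 + l2 * l4) ∧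
        m1 ^ 2 - m2 ^ 2 = -(1 / 3) * (l1 ^ 2 + l2 ^ 2 - l3 ^ 2 - l4 ^ 2)) := by
  have hnab : ∀ x y : V, nabla x y = Nf l1 l2 l3 l4 m1 m2 x y := by
    intro x y
    funext j
    fin_cases j
    · have h := hkos x y (E 0)
      simp [gB, brkt, E, Pi.single_apply] at h
      simp [Nf]; linarith
    · have h := hkos x y (E 1)
      simp [gB, brkt, E, Pi.single_apply] at h
      simp [Nf]; linarith
    · have h := hkos x y (E 2)
      simp [gB, brkt, E, Pi.single_apply] at h
      simp [Nf]; linarith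
    · have h := hkos x y (E 3)
      simp [gB, brkt, E, Pi.single_apply] at h
      simp [Nf]; linarith
    · have h := hkos x y (E 4)
      simp [gB, brkt, E, Pi.single_apply] at h
      simp [Nf]; linarith
  have key : ∀ x y : V, ricci (brkt l1 l2 l3 l4 m1 m2) nabla x y =
      (2*(m2^2 - m1^2) - 2*(l1^2 + l2^2 - l3^2 - l4^2)) *
        (x 0 * y 0 + x 1 * y 1 - x 2 * y 2 - x 3 * y 3)
      + (-4*(m1*m2 + l1*l3 + l2*l4)) * (x 0 * y 2 + x 2 * y 0 + x 1 * y 3 + x 3 * y 1)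
      + (4*(m1^2 - m2^2)) * (x 4 * y 4) := by
    intro x y
    simp [ricci, curv4, curv, hnab, gB, Nf, brkt, E, eps, Fin.sum_univ_five, Pi.single_apply]
    ring
  constructor
  · rintro ⟨c, h⟩
    have h02 := h (E 0) (E 2)
    have h00 := h (E 0) (E 0)
    have h44 := h (E 4) (E 4)
    rw [key] at h02 h00 h44
    simp [gB, E, Pi.single_apply] at h02 h00 h44
    constructor
    · linarith
    · nlinarith [h00, h44]
  · rintro ⟨h1, h2⟩
    refine ⟨4*(m1^2 - m2^2), fun x y => ?_⟩
    rw [key, gB]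
    linear_combination (-4*(x 0*y 2 + x 2*y 0 + x 1*y 3 + x 3*y 1))*h1
      + (-6*(x 0*y 0 + x 1*y 1 - x 2*y 2 - x 3*y 3))*h2
end
end
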